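/- Let C be a closed model category. Let F : C → Prod(C) be the functor sending an object of C to the formal product indexed by a one-element set on that object (and a morphism to itself), and let G : Prod(C) → C be the functor sending ∏_{i∈I} A_i to the product in C of the A_i over i ∈ I, and sending a morphism f : ∏_{i∈I} A_i → ∏_{j∈J} B_j to the product over i ∈ I of the induced morphisms f^i. Then F is left adjoint to G, and F preserves cofibrations, weak equivalences and fibrations; in particular the pair (F, G) is a Quillen adjunction between C and Prod(C). -/

import Mathlib

open CategoryTheory Limits

universe v u

/-- The category of formal products of objects of `C`. -/
structure FormalProd (C : Type u) [Category.{v} C] : Type (max u (v + 1)) where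
  ι : Type v
  obj : ι → C

namespace FormalProd

variable {C : Type u} [Category.{v} C]

instance : Category.{v} (FormalProd C) where
  Hom A B := Σ r : B.ι → A.ι, ∀ j : B.ι, A.obj (r j) ⟶ B.obj j
  id A := ⟨fun i => i, fun i => 𝟙 (A.obj i)⟩
  comp {A B D} f g := ⟨fun k => f.1 (g.1 k), fun k => f.2 (g.1 k) ≫ g.2 k⟩
  id_comp f := by obtain ⟨r, φ⟩ := f; simp
  comp_id f := by obtain ⟨r, φ⟩ := f; simp
  assoc f g h := by simp

/-- The index map of a morphism of formal products. -/
def Hom.index {A B : FormalProd C} (f : A ⟶ B) : B.ι → A.ι := f.1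

/-- The components of a morphism of formal products. -/
def Hom.component {A B : FormalProd C} (f : A ⟶ B) (j : B.ι) :
    A.obj (Hom.index f j) ⟶ B.obj j := f.2 j

end FormalProd

/-- A closed model category structure on `C` (Quillen): three classes of morphisms—
cofibrations, fibrations and weak equivalences—each containing the identities and
closed under composition and retracts; weak equivalences satisfy two-out-of-three;
(acyclic) cofibrations have the left lifting property with respect to (acyclic)
fibrations; and every morphism factors as a cofibration followed by an acyclic
fibration and as an acyclic cofibration followed by a fibration.  (The requirement
that `C` have all small limits and colimits is imposed separately via
`HasLimits C` and `HasColimits C`.) -/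
structure ClosedModelStructure (C : Type u) [Category.{v} C] where
  cof : MorphismProperty C
  fib : MorphismProperty C
  weq : MorphismProperty C
  cof_id : ∀ X : C, cof (𝟙 X)
  fib_id : ∀ X : C, fib (𝟙 X)
  weq_id : ∀ X : C, weq (𝟙 X)
  cof_comp : ∀ {X Y Z : C} (f : X ⟶ Y) (g : Y ⟶ Z), cof f → cof g → cof (f ≫ g)
  fib_comp : ∀ {X Y Z : C} (f : X ⟶ Y) (g : Y ⟶ Z), fib f → fib g → fib (f ≫ g)
  weq_comp : ∀ {X Y Z : C} (f : X ⟶ Y) (g : Y ⟶ Z), weq f → weq g → weq (f ≫ g)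
  weq_of_comp_right : ∀ {X Y Z : C} (f : X ⟶ Y) (g : Y ⟶ Z),
    weq f → weq (f ≫ g) → weq g
  weq_of_comp_left : ∀ {X Y Z : C} (f : X ⟶ Y) (g : Y ⟶ Z),
    weq g → weq (f ≫ g) → weq f
  cof_retract : ∀ {A A' B B' : C} (f : A ⟶ A') (g : B ⟶ B')
    (i : A ⟶ B) (r : B ⟶ A) (i' : A' ⟶ B') (r' : B' ⟶ A'),
    i ≫ r = 𝟙 A → i' ≫ r' = 𝟙 A' → i ≫ g = f ≫ i' → r ≫ f = g ≫ r' →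
    cof g → cof f
  fib_retract : ∀ {A A' B B' : C} (f : A ⟶ A') (g : B ⟶ B')
    (i : A ⟶ B) (r : B ⟶ A) (i' : A' ⟶ B') (r' : B' ⟶ A'),
    i ≫ r = 𝟙 A → i' ≫ r' = 𝟙 A' → i ≫ g = f ≫ i' → r ≫ f = g ≫ r' →
    fib g → fib f
  weq_retract : ∀ {A A' B B' : C} (f : A ⟶ A') (g : B ⟶ B')
    (i : A ⟶ B) (r : B ⟶ A) (i' : A' ⟶ B') (r' : B' ⟶ A'),
    i ≫ r = 𝟙 A → i' ≫ r' = 𝟙 A' → i ≫ g = f ≫ i' → r ≫ f = g ≫ r' →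
    weq g → weq f
  lift_cof_acyclicFib : ∀ {A B X Y : C} (f : A ⟶ B) (g : X ⟶ Y) (u : A ⟶ X)
    (v : B ⟶ Y), cof f → fib g → weq g → u ≫ g = f ≫ v →
    ∃ h : B ⟶ X, f ≫ h = u ∧ h ≫ g = v
  lift_acyclicCof_fib : ∀ {A B X Y : C} (f : A ⟶ B) (g : X ⟶ Y) (u : A ⟶ X)
    (v : B ⟶ Y), cof f → weq f → fib g → u ≫ g = f ≫ v →
    ∃ h : B ⟶ X, f ≫ h = u ∧ h ≫ g = v
  fact_cof_acyclicFib : ∀ {X Y : C} (f : X ⟶ Y),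
    ∃ (Z : C) (i : X ⟶ Z) (p : Z ⟶ Y), cof i ∧ fib p ∧ weq p ∧ i ≫ p = f
  fact_acyclicCof_fib : ∀ {X Y : C} (f : X ⟶ Y),
    ∃ (Z : C) (i : X ⟶ Z) (p : Z ⟶ Y), cof i ∧ weq i ∧ fib p ∧ i ≫ p = f

namespace FormalProd

variable {C : Type u} [Category.{v} C]

/-- A morphism of `Prod(C)` is a *cofibration* if all of its components are
cofibrations in `C`. -/
def prodCof (M : ClosedModelStructure C) : MorphismProperty (FormalProd C) :=
  fun _ B f => ∀ j : B.ι, M.cof (f.2 j)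

/-- A morphism of `Prod(C)` is a *weak equivalence* if its index map is a bijection
and all of its components are weak equivalences in `C`. -/
def prodWeq (M : ClosedModelStructure C) : MorphismProperty (FormalProd C) :=
  fun _ B f => Function.Bijective f.1 ∧ ∀ j : B.ι, M.weq (f.2 j)

/-- For a morphism `f : ∏_{i∈I} A_i ⟶ ∏_{j∈J} B_j` of `Prod(C)` and `i ∈ I`, the
induced morphism `f^i : A_i ⟶ ∏ { B_j | i_j = i }` into the product in `C` of the
`B_j` over those `j` with `i_j = i`, whose components are the `f_j` with `i_j = i`. -/
noncomputable def fiberMap [HasLimits C] {A B : FormalProd C} (f : A ⟶ B) (i : A.ι) :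
    A.obj i ⟶ ∏ᶜ (fun j : {j : B.ι // f.1 j = i} => B.obj j.1) :=
  Pi.lift fun j => eqToHom (congrArg A.obj j.2.symm) ≫ f.2 j.1

/-- A morphism `f` of `Prod(C)` is a *fibration* if for every index `i` of the source
the induced morphism `f^i` is a fibration in `C`. -/
def prodFib [HasLimits C] (M : ClosedModelStructure C) :
    MorphismProperty (FormalProd C) :=
  fun A _ f => ∀ i : A.ι, M.fib (fiberMap f i)

end FormalProd

namespace FormalProd

variable (C : Type u) [Category.{v} C]

/-- The inclusion functor `F : C ⥤ Prod(C)`, sending an object of `C` to the formal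
product indexed by a one-element set on that object, and a morphism to itself. -/
def inclusionFunctor : C ⥤ FormalProd C where
  obj X := ⟨PUnit, fun _ => X⟩
  map f := ⟨fun _ => PUnit.unit, fun _ => f⟩
  map_id := by intros; rfl
  map_comp := by intros; rfl

/-- The functor `G : Prod(C) ⥤ C` sending a formal product `∏_{i∈I} A_i` to the
actual product in `C` of the `A_i` over `i ∈ I`, and a morphism
`f : ∏_{i∈I} A_i ⟶ ∏_{j∈J} B_j` to the induced morphism of products (the product
over `i ∈ I` of the morphisms `f^i`). -/
noncomputable def productFunctor [HasLimits C] : FormalProd C ⥤ C where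
  obj A := ∏ᶜ A.obj
  map {A B} f := Pi.lift fun j => Pi.π A.obj (f.1 j) ≫ f.2 j
  map_id := by
    intro A
    ext j
    simp only [limit.lift_π, Fan.mk_pt, Fan.mk_π_app, Category.id_comp]
    show Pi.π A.obj j ≫ 𝟙 (A.obj j) = Pi.π A.obj j
    simp
  map_comp := by
    intro A B D f g
    ext j
    simp only [limit.lift_π, Fan.mk_pt, Fan.mk_π_app, Category.assoc]
    show Pi.π A.obj (f.1 (g.1 j)) ≫ f.2 (g.1 j) ≫ g.2 j = _
    simp

end FormalProd


section Aux
variable {C : Type u} [Category.{v} C]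

lemma fib_of_iso (M : ClosedModelStructure C) {X Y : C} (f : X ⟶ Y) [IsIso f] :
    M.fib f := by
  refine M.fib_retract f (𝟙 X) (𝟙 X) (𝟙 X) (inv f) f ?_ ?_ ?_ ?_ (M.fib_id X) <;> simp

noncomputable def adjEquiv [HasLimits C] (X : C) (A : FormalProd C) :
    ((FormalProd.inclusionFunctor C).obj X ⟶ A) ≃ (X ⟶ ∏ᶜ A.obj) where
  toFun f := Pi.lift fun j => f.2 j
  invFun g := ⟨fun _ => PUnit.unit, fun j => g ≫ Pi.π A.obj j⟩
  left_inv f := by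
    obtain ⟨r, φ⟩ := f
    refine Sigma.ext (funext fun j => rfl) (heq_of_eq (funext fun j => ?_))
    simp
    exact Pi.lift_π _ _
  right_inv g := by
    ext j
    simp
    rfl

end Aux

open FormalProd in
/-- `F` is left adjoint to `G`, and `F` preserves cofibrations, weak equivalences
and fibrations; in particular `(F, G)` is a Quillen adjunction between `C` and
`Prod(C)`. -/
theorem formalProd_quillenAdjunction (C : Type u) [Category.{v} C]
    [HasLimits C] [HasColimits C] (M : ClosedModelStructure C) :
    Nonempty (inclusionFunctor C ⊣ productFunctor C) ∧
    (∀ {X Y : C} (f : X ⟶ Y), M.cof f → prodCof M ((inclusionFunctor C).map f)) ∧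
    (∀ {X Y : C} (f : X ⟶ Y), M.weq f → prodWeq M ((inclusionFunctor C).map f)) ∧
    (∀ {X Y : C} (f : X ⟶ Y), M.fib f → prodFib M ((inclusionFunctor C).map f)) := by
  refine ⟨?_, ?_, ?_, ?_⟩
  · refine ⟨Adjunction.mkOfHomEquiv
      { homEquiv := fun X A => adjEquiv X A
        homEquiv_naturality_left_symm := ?_
        homEquiv_naturality_right := ?_ }⟩
    · intro X' X A f g
      refine Sigma.ext rfl (heq_of_eq (funext fun j => ?_))
      change (f ≫ g) ≫ Pi.π A.obj j = f ≫ g ≫ Pi.π A.obj j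
      exact Category.assoc _ _ _
    · intro X A B f g
      dsimp [adjEquiv, FormalProd.productFunctor]
      ext j
      simp
      change (Pi.lift fun j => ((f ≫ g).2 j : X ⟶ B.obj j)) ≫ Pi.π B.obj j = (Pi.lift fun j => (f.2 j : X ⟶ A.obj j)) ≫ Pi.π A.obj (g.1 j) ≫ g.2 j
      exact (Pi.lift_π _ _).trans (Pi.lift_π_assoc _ _ _).symm
  · intro X Y f hf j
    exact hf
  · intro X Y f hf
    exact ⟨⟨fun a b _ => rfl, fun a => ⟨PUnit.unit, rfl⟩⟩, fun j => hf⟩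
  · intro X Y f hf i
    have heq : fiberMap ((inclusionFunctor C).map f) i
        = f ≫ Pi.lift (fun _ => 𝟙 Y) := by
      ext j
      simp only [fiberMap, limit.lift_π, Fan.mk_pt, Fan.mk_π_app, Category.assoc]
      change _ = (f ≫ Pi.lift (fun _ => 𝟙 Y)) ≫ Pi.π (fun _ => Y) j
      rw [Category.assoc, Pi.lift_π]
      show (𝟙 X : X ⟶ X) ≫ f = f ≫ 𝟙 Y
      simp
    rw [heq]
    refine M.fib_comp _ _ hf (@fib_of_iso _ _ M _ _ _ ?_)
    refine ⟨Pi.π _ ⟨PUnit.unit, rfl⟩, ?_, ?_⟩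
    · erw [limit.lift_π]; simp
    · ext j
      have hj : j = ⟨PUnit.unit, rfl⟩ := Subtype.ext rfl
      subst hj
      simp only [Category.assoc, Category.id_comp]
      change (Pi.π (fun _ : {j // ((inclusionFunctor C).map f).fst j = i} => Y) ⟨PUnit.unit, rfl⟩ ≫ Pi.lift (fun _ => 𝟙 Y)) ≫ Pi.π (fun _ : {j // ((inclusionFunctor C).map f).fst j = i} => Y) ⟨PUnit.unit, rfl⟩ = Pi.π (fun _ : {j // ((inclusionFunctor C).map f).fst j = i} => Y) ⟨PUnit.unit, rfl⟩
      rw [Category.assoc, Pi.lift_π]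
      simp
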